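/- arXiv:1505.05109 — 2 statements merged into one kernel-verified Lean document; each statement's English description precedes it below -/
import Mathlib

section
/- Let (G,M,I) be a finite context with ∅'' = ∅ and let T be a set of nonempty box extents of (G,M,I). Then T is a maximal classification tree in the box extent lattice B(G,M,I) if and only if T is a maximal complete classification tree in the lattice of extents of (G,M,I), i.e., a complete classification tree that is not properly contained in any other complete classification tree. -/
open Set

variable {G M : Type*}

/-- The attribute-derivation `A'` of a set of objects (the restricted relation of a
subcontext agrees with `I` on its object set, so no restriction is needed here). -/
def polarUp (I : G → M → Prop) (A : Set G) : Set M := {m | ∀ g ∈ A, I g m}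

/-- The object-derivation `B'` of a set of attributes, computed in the subcontext whose
object set is `H` (relation `I ∩ H×M`). -/
def polarDown (I : G → M → Prop) (H : Set G) (B : Set M) : Set G :=
  {g | g ∈ H ∧ ∀ m ∈ B, I g m}

/-- The closure `A''` computed in the subcontext with object set `H`.
Taking `H = Set.univ` gives the closure in the full context `(G,M,I)`. -/
def cl2 (I : G → M → Prop) (H A : Set G) : Set G := polarDown I H (polarUp I A)

/-- `A` is an extent of the subcontext with object set `H`. -/
def IsExtent (I : G → M → Prop) (H A : Set G) : Prop := A ⊆ H ∧ cl2 I H A = A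

/-- An extent partition of the subcontext with object set `H`: a partition of `H`
all of whose classes are extents. -/
def IsExtentPartition (I : G → M → Prop) (H : Set G) (π : Set (Set G)) : Prop :=
  (∀ A ∈ π, A.Nonempty) ∧ π.Pairwise Disjoint ∧ ⋃₀ π = H ∧ ∀ A ∈ π, IsExtent I H A

/-- `E` is a box extent of the subcontext with object set `H`: a class of some extent
partition, or `∅''`. -/
def IsBoxExtent (I : G → M → Prop) (H E : Set G) : Prop :=
  (∃ π : Set (Set G), IsExtentPartition I H π ∧ E ∈ π) ∨ E = cl2 I H ∅

/-- The finest extent partition: every class of every extent partition is a union of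
its classes. -/
def IsFinestExtentPartition (I : G → M → Prop) (H : Set G) (π : Set (Set G)) : Prop :=
  IsExtentPartition I H π ∧
    ∀ σ : Set (Set G), IsExtentPartition I H σ → ∀ A ∈ σ, ∃ S ⊆ π, A = ⋃₀ S

/-- A classification tree in the box extent lattice of the subcontext with object set
`H`: a set of nonempty box extents such that for every nonempty box extent `X`,
`{E ∈ T | X ⊆ E}` is a nonempty chain under inclusion. -/
def IsBoxClassTree (I : G → M → Prop) (H : Set G) (T : Set (Set G)) : Prop :=
  (∀ E ∈ T, E.Nonempty ∧ IsBoxExtent I H E) ∧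
  ∀ X : Set G, X.Nonempty → IsBoxExtent I H X →
    ({E ∈ T | X ⊆ E}.Nonempty ∧ IsChain (· ⊆ ·) {E ∈ T | X ⊆ E})

/-- A maximal classification tree in the box extent lattice. -/
def IsMaxBoxClassTree (I : G → M → Prop) (H : Set G) (T : Set (Set G)) : Prop :=
  IsBoxClassTree I H T ∧ ∀ T' : Set (Set G), IsBoxClassTree I H T' → T ⊆ T' → T' = T

/-- A classification tree in the lattice of extents of the full context `(G,M,I)`:
a set of nonempty extents such that for every nonempty extent `X`, `{E ∈ T | X ⊆ E}`
is a nonempty chain under inclusion. -/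
def IsExtClassTree (I : G → M → Prop) (T : Set (Set G)) : Prop :=
  (∀ E ∈ T, E.Nonempty ∧ IsExtent I Set.univ E) ∧
  ∀ X : Set G, X.Nonempty → IsExtent I Set.univ X →
    ({E ∈ T | X ⊆ E}.Nonempty ∧ IsChain (· ⊆ ·) {E ∈ T | X ⊆ E})

/-- `A` is a maximal antichain of `(T, ⊆)`. -/
def IsMaxAntichainIn (T A : Set (Set G)) : Prop :=
  A ⊆ T ∧ IsAntichain (· ⊆ ·) A ∧
    ∀ B : Set (Set G), B ⊆ T → A ⊆ B → IsAntichain (· ⊆ ·) B → B = A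

/-- A complete classification tree in the lattice of extents: every maximal antichain
of `(T, ⊆)` covers `G`. -/
def IsCompleteExtClassTree (I : G → M → Prop) (T : Set (Set G)) : Prop :=
  IsExtClassTree I T ∧
    ∀ A : Set (Set G), IsMaxAntichainIn T A → ⋃₀ A = Set.univ

section Aux

variable (I : G → M → Prop)

lemma subset_cl (A : Set G) : A ⊆ cl2 I Set.univ A :=
  fun g hg => ⟨Set.mem_univ g, fun m hm => hm g hg⟩

lemma cl_mono {A B : Set G} (h : A ⊆ B) : cl2 I Set.univ A ⊆ cl2 I Set.univ B :=
  fun g hg => ⟨Set.mem_univ g, fun m hm => hg.2 m (fun x hx => hm x (h hx))⟩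

lemma polarUp_cl (A : Set G) : polarUp I (cl2 I Set.univ A) = polarUp I A := by
  ext m
  constructor
  · intro h g hg
    exact h g (subset_cl I A hg)
  · intro h g hg
    exact hg.2 m h

lemma cl_idem (A : Set G) :
    cl2 I Set.univ (cl2 I Set.univ A) = cl2 I Set.univ A := by
  show polarDown I Set.univ (polarUp I (cl2 I Set.univ A)) = _
  rw [polarUp_cl]
  rfl

lemma isExtent_univ : IsExtent I Set.univ (Set.univ : Set G) := by
  refine ⟨subset_rfl, subset_antisymm (fun g hg => hg.1) (subset_cl I _)⟩

lemma boxExtent_isExtent {E : Set G} (hempty : cl2 I Set.univ (∅ : Set G) = ∅)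
    (h : IsBoxExtent I Set.univ E) : IsExtent I Set.univ E := by
  rcases h with ⟨π, hπ, hE⟩ | h
  · exact hπ.2.2.2 E hE
  · refine ⟨Set.subset_univ _, ?_⟩
    rw [h, cl_idem]

/-- the minimum box extent containing `g` -/
def Qset (g : G) : Set G :=
  ⋂₀ {A | (∃ π, IsExtentPartition I Set.univ π ∧ A ∈ π) ∧ g ∈ A}

lemma mem_Qset (g : G) : g ∈ Qset I g := fun _ hA => hA.2

lemma Qset_min {E : Set G} (hempty : cl2 I Set.univ (∅ : Set G) = ∅)
    (hEne : E.Nonempty) (hE : IsBoxExtent I Set.univ E) {g : G} (hg : g ∈ E) :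
    Qset I g ⊆ E := by
  rcases hE with ⟨π, hπ, hEπ⟩ | h
  · exact Set.sInter_subset_of_mem ⟨⟨π, hπ, hEπ⟩, hg⟩
  · rw [h, hempty] at hg
    exact absurd hg (Set.notMem_empty g)

lemma Qset_eq {g h : G} (hh : h ∈ Qset I g) : Qset I h = Qset I g := by
  have hfam : {A | (∃ π, IsExtentPartition I Set.univ π ∧ A ∈ π) ∧ g ∈ A}
      = {A | (∃ π, IsExtentPartition I Set.univ π ∧ A ∈ π) ∧ h ∈ A} := by
    ext A
    constructor
    · rintro ⟨hc, hgA⟩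
      exact ⟨hc, hh A ⟨hc, hgA⟩⟩
    · rintro ⟨⟨π, hπ, hAπ⟩, hhA⟩
      refine ⟨⟨π, hπ, hAπ⟩, ?_⟩
      have hgu : g ∈ ⋃₀ π := by rw [hπ.2.2.1]; exact Set.mem_univ g
      obtain ⟨A₀, hA₀π, hgA₀⟩ := hgu
      have hhA₀ : h ∈ A₀ := hh A₀ ⟨⟨π, hπ, hA₀π⟩, hgA₀⟩
      by_cases hAA : A = A₀
      · exact hAA ▸ hgA₀
      · exact absurd (Set.disjoint_left.mp (hπ.2.1 hAπ hA₀π hAA) hhA) (fun c => c hhA₀)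
  unfold Qset
  rw [hfam]

lemma Qset_isExtent (g : G) : IsExtent I Set.univ (Qset I g) := by
  refine ⟨Set.subset_univ _, subset_antisymm ?_ (subset_cl I _)⟩
  intro x hx
  refine Set.mem_sInter.mpr ?_
  intro A hA
  obtain ⟨⟨π, hπ, hAπ⟩, -⟩ := id hA
  have hAext := hπ.2.2.2 A hAπ
  have : cl2 I Set.univ (Qset I g) ⊆ cl2 I Set.univ A :=
    cl_mono I (Set.sInter_subset_of_mem hA)
  rw [hAext.2] at this
  exact this hx

lemma Qset_box (g : G) : IsBoxExtent I Set.univ (Qset I g) := by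
  left
  refine ⟨Set.range (Qset I), ⟨?_, ?_, ?_, ?_⟩, ⟨g, rfl⟩⟩
  · rintro A ⟨h, rfl⟩
    exact ⟨h, mem_Qset I h⟩
  · rintro A ⟨a, rfl⟩ B ⟨b, rfl⟩ hne
    rw [Set.disjoint_left]
    intro x hxa hxb
    exact hne ((Qset_eq I hxa) ▸ (Qset_eq I hxb) ▸ rfl)
  · apply subset_antisymm (Set.subset_univ _)
    intro x _
    exact ⟨Qset I x, ⟨x, rfl⟩, mem_Qset I x⟩
  · rintro A ⟨h, rfl⟩
    exact Qset_isExtent I h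

lemma box_tree_laminar {T : Set (Set G)} (hempty : cl2 I Set.univ (∅ : Set G) = ∅)
    (hT : IsBoxClassTree I Set.univ T) {E₁ E₂ : Set G} (h1 : E₁ ∈ T) (h2 : E₂ ∈ T)
    {g : G} (hg1 : g ∈ E₁) (hg2 : g ∈ E₂) : E₁ ⊆ E₂ ∨ E₂ ⊆ E₁ := by
  have hchain := (hT.2 (Qset I g) ⟨g, mem_Qset I g⟩ (Qset_box I g)).2
  have hs1 : Qset I g ⊆ E₁ := Qset_min I hempty (hT.1 E₁ h1).1 (hT.1 E₁ h1).2 hg1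
  have hs2 : Qset I g ⊆ E₂ := Qset_min I hempty (hT.1 E₂ h2).1 (hT.1 E₂ h2).2 hg2
  by_cases he : E₁ = E₂
  · exact Or.inl (he ▸ subset_rfl)
  · exact hchain ⟨h1, hs1⟩ ⟨h2, hs2⟩ he

lemma ext_tree_laminar {T : Set (Set G)} (hT : IsExtClassTree I T)
    {E₁ E₂ : Set G} (h1 : E₁ ∈ T) (h2 : E₂ ∈ T)
    {g : G} (hg1 : g ∈ E₁) (hg2 : g ∈ E₂) : E₁ ⊆ E₂ ∨ E₂ ⊆ E₁ := by
  have hXne : (cl2 I Set.univ {g}).Nonempty := ⟨g, subset_cl I {g} rfl⟩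
  have hXext : IsExtent I Set.univ (cl2 I Set.univ {g}) :=
    ⟨Set.subset_univ _, cl_idem I _⟩
  have hchain := (hT.2 _ hXne hXext).2
  have hs1 : cl2 I Set.univ {g} ⊆ E₁ := by
    have := cl_mono I (Set.singleton_subset_iff.mpr hg1)
    rwa [(hT.1 E₁ h1).2.2] at this
  have hs2 : cl2 I Set.univ {g} ⊆ E₂ := by
    have := cl_mono I (Set.singleton_subset_iff.mpr hg2)
    rwa [(hT.1 E₂ h2).2.2] at this
  by_cases he : E₁ = E₂
  · exact Or.inl (he ▸ subset_rfl)
  · exact hchain ⟨h1, hs1⟩ ⟨h2, hs2⟩ he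

lemma univ_boxExtent (g : G) : IsBoxExtent I Set.univ (Set.univ : Set G) := by
  left
  refine ⟨{Set.univ}, ⟨?_, ?_, ?_, ?_⟩, rfl⟩
  · rintro A rfl
    exact ⟨g, Set.mem_univ g⟩
  · exact Set.pairwise_singleton _ _
  · exact Set.sUnion_singleton _
  · rintro A rfl
    exact isExtent_univ I
lemma univ_mem_box_tree {T : Set (Set G)} (hT : IsBoxClassTree I Set.univ T) (g : G) :
    (Set.univ : Set G) ∈ T := by
  obtain ⟨E, hE, hsub⟩ := (hT.2 Set.univ ⟨g, Set.mem_univ g⟩ (univ_boxExtent I g)).1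
  rwa [Set.univ_subset_iff.mp hsub] at hE

lemma box_tree_to_ext {T : Set (Set G)} (hempty : cl2 I Set.univ (∅ : Set G) = ∅)
    (hT : IsBoxClassTree I Set.univ T) : IsExtClassTree I T := by
  refine ⟨fun E hE => ⟨(hT.1 E hE).1, boxExtent_isExtent I hempty (hT.1 E hE).2⟩, ?_⟩
  intro X hXne _
  obtain ⟨g, hg⟩ := hXne
  refine ⟨⟨Set.univ, univ_mem_box_tree I hT g, Set.subset_univ X⟩, ?_⟩
  rintro E₁ ⟨h1, s1⟩ E₂ ⟨h2, s2⟩ hne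
  exact box_tree_laminar I hempty hT h1 h2 (s1 hg) (s2 hg)

lemma ext_tree_to_box {T : Set (Set G)} (hempty : cl2 I Set.univ (∅ : Set G) = ∅)
    (hT : IsExtClassTree I T) (hbox : ∀ E ∈ T, IsBoxExtent I Set.univ E) :
    IsBoxClassTree I Set.univ T := by
  refine ⟨fun E hE => ⟨(hT.1 E hE).1, hbox E hE⟩, ?_⟩
  intro X hXne hX
  exact hT.2 X hXne (boxExtent_isExtent I hempty hX)

lemma Qset_mem_max {T : Set (Set G)} (hempty : cl2 I Set.univ (∅ : Set G) = ∅)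
    (hT : IsMaxBoxClassTree I Set.univ T) (g : G) : Qset I g ∈ T := by
  have hbig : IsBoxClassTree I Set.univ (insert (Qset I g) T) := by
    constructor
    · rintro E (rfl | hE)
      · exact ⟨⟨g, mem_Qset I g⟩, Qset_box I g⟩
      · exact hT.1.1 E hE
    · intro X hXne hX
      obtain ⟨E, hE, hXE⟩ := (hT.1.2 X hXne hX).1
      obtain ⟨h, hh⟩ := hXne
      refine ⟨⟨E, Set.mem_insert_of_mem _ hE, hXE⟩, ?_⟩
      rintro E₁ ⟨m1, s1⟩ E₂ ⟨m2, s2⟩ hne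
      rcases Set.mem_insert_iff.mp m1 with he1 | m1 <;>
        rcases Set.mem_insert_iff.mp m2 with he2 | m2
      · exact absurd (he1.trans he2.symm) hne
      · left
        rw [he1]
        have heq : Qset I h = Qset I g := Qset_eq I (he1 ▸ s1 hh)
        have hs : Qset I h ⊆ E₂ :=
          Qset_min I hempty (hT.1.1 E₂ m2).1 (hT.1.1 E₂ m2).2 (s2 hh)
        rwa [heq] at hs
      · right
        rw [he2]
        have heq : Qset I h = Qset I g := Qset_eq I (he2 ▸ s2 hh)
        have hs : Qset I h ⊆ E₁ :=
          Qset_min I hempty (hT.1.1 E₁ m1).1 (hT.1.1 E₁ m1).2 (s1 hh)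
        rwa [heq] at hs
      · exact box_tree_laminar I hempty hT.1 m1 m2 (s1 hh) (s2 hh)
  have := hT.2 _ hbig (Set.subset_insert _ _)
  rw [← this]
  exact Set.mem_insert _ _

lemma max_box_complete {T : Set (Set G)} (hempty : cl2 I Set.univ (∅ : Set G) = ∅)
    (hT : IsMaxBoxClassTree I Set.univ T) {A : Set (Set G)}
    (hA : IsMaxAntichainIn T A) : ⋃₀ A = Set.univ := by
  obtain ⟨hAT, hanti, hmax⟩ := hA
  rw [Set.eq_univ_iff_forall]
  intro g
  by_contra hg
  have hgF : ∀ F ∈ A, g ∉ F := fun F hF hgF => hg ⟨F, hF, hgF⟩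
  have hQT : Qset I g ∈ T := Qset_mem_max I hempty hT g
  have hdisj : ∀ F ∈ A, Disjoint F (Qset I g) := by
    intro F hF
    rw [Set.disjoint_left]
    intro h hhF hhQ
    have h1 : Qset I h = Qset I g := Qset_eq I hhQ
    have h2 : Qset I h ⊆ F :=
      Qset_min I hempty (hT.1.1 F (hAT hF)).1 (hT.1.1 F (hAT hF)).2 hhF
    exact hgF F hF (h2 (h1.symm ▸ mem_Qset I g))
  have hQA : Qset I g ∉ A := fun hQ =>
    Set.disjoint_left.mp (hdisj _ hQ) (mem_Qset I g) (mem_Qset I g)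
  have hBanti : IsAntichain (· ⊆ ·) (insert (Qset I g) A) := by
    intro a ha b hb hne hsub
    rcases Set.mem_insert_iff.mp ha with he1 | ha <;>
      rcases Set.mem_insert_iff.mp hb with he2 | hb
    · exact hne (he1.trans he2.symm)
    · exact hgF b hb (hsub (he1 ▸ mem_Qset I g))
    · obtain ⟨x, hx⟩ := (hT.1.1 a (hAT ha)).1
      exact Set.disjoint_left.mp (hdisj a ha) hx (he2 ▸ hsub hx)
    · exact hanti ha hb hne hsub
  have := hmax (insert (Qset I g) A)
    (Set.insert_subset_iff.mpr ⟨hQT, hAT⟩) (Set.subset_insert _ _) hBanti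
  exact hQA (this ▸ Set.mem_insert _ _)

lemma complete_elements_box [Fintype G] {T' : Set (Set G)}
    (hT' : IsCompleteExtClassTree I T') {E : Set G} (hE : E ∈ T') :
    IsBoxExtent I Set.univ E := by
  classical
  set s : Set (Set (Set G)) :=
    {B | B ⊆ T' ∧ IsAntichain (· ⊆ ·) B ∧ E ∈ B} with hs
  have hsne : s.Nonempty := by
    refine ⟨{E}, Set.singleton_subset_iff.mpr hE, ?_, rfl⟩
    exact Set.Subsingleton.isAntichain (Set.subsingleton_singleton) _
  obtain ⟨A, hAs, hAmax'⟩ := (Set.toFinite s).exists_maximal hsne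
  have hAmax : ∀ C ∈ s, A ⊆ C → A = C := fun C hC h => subset_antisymm h (hAmax' hC h)
  have hAmaxanti : IsMaxAntichainIn T' A := by
    refine ⟨hAs.1, hAs.2.1, fun C hCT hAC hCanti => ?_⟩
    exact (hAmax C ⟨hCT, hCanti, hAC hAs.2.2⟩ hAC).symm
  have hcov := hT'.2 A hAmaxanti
  left
  refine ⟨A, ⟨fun F hF => (hT'.1.1 F (hAs.1 hF)).1, ?_, hcov,
    fun F hF => (hT'.1.1 F (hAs.1 hF)).2⟩, hAs.2.2⟩
  intro F₁ h1 F₂ h2 hne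
  rw [Set.disjoint_left]
  intro x hx1 hx2
  rcases ext_tree_laminar I hT'.1 (hAs.1 h1) (hAs.1 h2) hx1 hx2 with hc | hc
  · exact hAs.2.1 h1 h2 hne hc
  · exact hAs.2.1 h2 h1 (fun c => hne c.symm) hc

lemma exists_max_box_above [Fintype G] {T₀ : Set (Set G)}
    (hT₀ : IsBoxClassTree I Set.univ T₀) :
    ∃ T'', IsMaxBoxClassTree I Set.univ T'' ∧ T₀ ⊆ T'' := by
  classical
  set s : Set (Set (Set G)) := {U | IsBoxClassTree I Set.univ U ∧ T₀ ⊆ U} with hs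
  obtain ⟨U, hUs, hUmax'⟩ :=
    (Set.toFinite s).exists_maximal ⟨T₀, hT₀, subset_rfl⟩
  have hUmax : ∀ V ∈ s, U ⊆ V → U = V := fun V hV h => subset_antisymm h (hUmax' hV h)
  refine ⟨U, ⟨hUs.1, fun V hV hUV => ?_⟩, hUs.2⟩
  exact (hUmax V ⟨hV, hUs.2.trans hUV⟩ hUV).symm

end Aux

/-- A set `T` of nonempty box extents is a maximal classification tree in the box extent
lattice `B(G,M,I)` iff it is a maximal complete classification tree in the lattice of
extents of `(G,M,I)`. -/
theorem maxBoxClassTree_iff_maxCompleteExtClassTree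
    [Fintype G] [Fintype M] (I : G → M → Prop)
    (hempty : cl2 I Set.univ (∅ : Set G) = ∅)
    (T : Set (Set G)) (hT : ∀ E ∈ T, E.Nonempty ∧ IsBoxExtent I Set.univ E) :
    IsMaxBoxClassTree I Set.univ T ↔
      (IsCompleteExtClassTree I T ∧
        ∀ T' : Set (Set G), IsCompleteExtClassTree I T' → T ⊆ T' → T' = T) := by
  constructor
  · intro h
    refine ⟨⟨box_tree_to_ext I hempty h.1, fun A hA => max_box_complete I hempty h hA⟩, ?_⟩
    intro T' hT' hTT'
    exact h.2 T' (ext_tree_to_box I hempty hT'.1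
      (fun E hE => complete_elements_box I hT' hE)) hTT'
  · rintro ⟨hc, hmax⟩
    have hbox : IsBoxClassTree I Set.univ T :=
      ext_tree_to_box I hempty hc.1 (fun E hE => (hT E hE).2)
    refine ⟨hbox, ?_⟩
    intro T' hT' hTT'
    obtain ⟨T'', hT''max, hsub⟩ := exists_max_box_above I hT'
    have hT''c : IsCompleteExtClassTree I T'' :=
      ⟨box_tree_to_ext I hempty hT''max.1, fun A hA => max_box_complete I hempty hT''max hA⟩
    have heq : T'' = T := hmax T'' hT''c (hTT'.trans hsub)
    exact subset_antisymm (heq ▸ hsub) hTT'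
end

section
/- Let (G,M,I) be a finite context with ∅'' = ∅, let z ∈ G and H = G ∖ {z}, let π□ be the finest extent partition of (G,M,I), and let z^□□ be the class of π□ containing z. If E is a box extent of (G,M,I), then either (1) E is a box extent of the subcontext (H, M, I ∩ (H×M)) with E ∩ z^□□ = ∅, or (2) E ∖ {z} is a box extent of the subcontext (H, M, I ∩ (H×M)). -/
open Set

variable {G M : Type*}

/-- Monotonicity of `cl2` in the set argument. -/
lemma cl2_mono {I : G → M → Prop} {H A B : Set G} (h : A ⊆ B) :
    cl2 I H A ⊆ cl2 I H B := by
  intro g hg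
  exact ⟨hg.1, fun m hm => hg.2 m (fun x hx => hm x (h hx))⟩

/-- `A ⊆ cl2 I H A` whenever `A ⊆ H`. -/
lemma subset_cl2 {I : G → M → Prop} {H A : Set G} (h : A ⊆ H) :
    A ⊆ cl2 I H A := fun g hg => ⟨h hg, fun _ hm => hm g hg⟩

/-- `cl2` in a subcontext is contained in `cl2` in the full context. -/
lemma cl2_subset_full {I : G → M → Prop} {H A : Set G} :
    cl2 I H A ⊆ cl2 I Set.univ A := fun g hg => ⟨trivial, hg.2⟩

/-- If `A` is an extent of the full context, then `A \ {z}` is an extent of the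
subcontext with object set `univ \ {z}`. -/
lemma isExtent_sdiff {I : G → M → Prop} {A : Set G} {z : G}
    (hA : IsExtent I Set.univ A) :
    IsExtent I (Set.univ \ {z}) (A \ {z}) := by
  constructor
  · exact fun g hg => ⟨trivial, hg.2⟩
  · apply Set.Subset.antisymm
    · intro g hg
      have h1 : g ∈ cl2 I Set.univ (A \ {z}) := cl2_subset_full hg
      have h2 : g ∈ cl2 I Set.univ A := cl2_mono (diff_subset) h1
      rw [hA.2] at h2
      exact ⟨h2, hg.1.2⟩
    · exact subset_cl2 (fun g hg => ⟨trivial, hg.2⟩)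

/-- If `E` is a box extent of `(G,M,I)` (with `∅'' = ∅`) and `H = G ∖ {z}`, then either
`E` is a box extent of the subcontext disjoint from `z^□□`, or `E ∖ {z}` is a box extent
of the subcontext. -/
theorem boxExtent_one_object_reduction
    [Fintype G] [Fintype M] (I : G → M → Prop)
    (hempty : cl2 I Set.univ (∅ : Set G) = ∅)
    (z : G) (π : Set (Set G)) (hπ : IsFinestExtentPartition I Set.univ π)
    (Z : Set G) (hZ : Z ∈ π) (hzZ : z ∈ Z)
    (E : Set G) (hE : IsBoxExtent I Set.univ E) :
    (IsBoxExtent I (Set.univ \ {z}) E ∧ E ∩ Z = ∅) ∨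
      IsBoxExtent I (Set.univ \ {z}) (E \ {z}) := by
  -- In the subcontext, the empty closure is still empty.
  have hemptyH : cl2 I (Set.univ \ {z}) (∅ : Set G) = ∅ := by
    apply Set.eq_empty_of_subset_empty
    calc cl2 I (Set.univ \ {z}) (∅ : Set G) ⊆ cl2 I Set.univ (∅ : Set G) :=
          cl2_subset_full
      _ = ∅ := hempty
  rcases hE with ⟨σ, hσ, hEσ⟩ | hE
  · -- E is a class of an extent partition σ of the full context.
    obtain ⟨hne, hdisj, hcover, hext⟩ := hσ
    -- The induced partition of the subcontext.
    set τ : Set (Set G) := {X | X.Nonempty ∧ ∃ A ∈ σ, X = A \ {z}} with hτdef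
    have hτ : IsExtentPartition I (Set.univ \ {z}) τ := by
      refine ⟨fun A hA => hA.1, ?_, ?_, ?_⟩
      · -- pairwise disjoint
        rintro X ⟨hXne, A, hA, rfl⟩ Y ⟨hYne, B, hB, rfl⟩ hXY
        have hAB : A ≠ B := by rintro rfl; exact hXY rfl
        exact Disjoint.mono diff_subset diff_subset (hdisj hA hB hAB)
      · -- covers univ \ {z}
        apply Set.Subset.antisymm
        · rintro g ⟨X, ⟨hXne, A, hA, rfl⟩, hgX⟩
          exact ⟨trivial, hgX.2⟩
        · rintro g ⟨-, hgz⟩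
          have : g ∈ ⋃₀ σ := by rw [hcover]; trivial
          obtain ⟨A, hA, hgA⟩ := this
          exact ⟨A \ {z}, ⟨⟨g, hgA, hgz⟩, A, hA, rfl⟩, hgA, hgz⟩
      · rintro X ⟨hXne, A, hA, rfl⟩
        exact isExtent_sdiff (hext A hA)
    by_cases hzE : z ∈ E
    · -- z ∈ E : use E \ {z}.
      right
      by_cases hEz : (E \ {z}).Nonempty
      · exact Or.inl ⟨τ, hτ, hEz, E, hEσ, rfl⟩
      · have h0 : E \ {z} = ∅ := Set.not_nonempty_iff_eq_empty.mp hEz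
        rw [h0]
        exact Or.inr hemptyH.symm
    · -- z ∉ E : E itself is a class of τ, and E ∩ Z = ∅.
      left
      have hEdiff : E \ {z} = E := by
        apply Set.diff_singleton_eq_self hzE
      constructor
      · exact Or.inl ⟨τ, hτ, ⟨hne E hEσ, E, hEσ, hEdiff.symm⟩⟩
      · -- E is a union of classes of the finest partition π; Z is a class containing z.
        obtain ⟨S, hSπ, hES⟩ := hπ.2 σ ⟨hne, hdisj, hcover, hext⟩ E hEσ
        apply Set.eq_empty_of_forall_notMem
        rintro g ⟨hgE, hgZ⟩
        obtain ⟨C, hCS, hgC⟩ := by rw [hES] at hgE; exact hgE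
        have hCπ : C ∈ π := hSπ hCS
        have hCZ : C = Z := by
          by_contra hne'
          exact Set.not_disjoint_iff.mpr ⟨g, hgC, hgZ⟩ (hπ.1.2.1 hCπ hZ hne')
        have : z ∈ E := by rw [hES]; exact ⟨C, hCS, hCZ ▸ hzZ⟩
        exact hzE this
  · -- E = cl2 univ ∅ = ∅.
    right
    rw [hE, hempty, Set.empty_diff]
    exact Or.inr hemptyH.symm
end
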